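/- Under the same hypotheses (Race and Gender independent, predictor ideally counterfactually fair), the predictor satisfies group fairness with respect to gender: P(Ŷ=y | X=x, Gender=g) = P(Ŷ=y | X=x, Gender=g') for all g,g' ∈ G. -/
import Mathlib


open Finset

/-- Probability of an event under a pmf `p` on a finite sample space. -/
noncomputable def Pr {Ω : Type*} [Fintype Ω] (p : Ω → ℝ) (E : Set Ω) : ℝ :=
  ∑ ω, Set.indicator E p ω

/-- Conditional probability `P(A | B)`. -/
noncomputable def cPr {Ω : Type*} [Fintype Ω] (p : Ω → ℝ) (A B : Set Ω) : ℝ :=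
  Pr p (A ∩ B) / Pr p B

lemma Pr_partition {Ω R : Type*} [Fintype Ω] [Fintype R] (p : Ω → ℝ) (S : Set Ω)
    (f : Ω → R) : Pr p S = ∑ r, Pr p (S ∩ {ω | f ω = r}) := by
  unfold Pr
  rw [Finset.sum_comm]
  refine Finset.sum_congr rfl fun ω _ => ?_
  by_cases hS : ω ∈ S
  · rw [Set.indicator_of_mem hS]
    rw [Finset.sum_eq_single (f ω)]
    · exact (Set.indicator_of_mem (Set.mem_inter hS (by exact rfl)) p).symm
    · intro r _ hr
      exact Set.indicator_of_notMem (fun h => hr h.2.symm) p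
    · intro h; exact absurd (Finset.mem_univ _) h
  · rw [Set.indicator_of_notMem hS]
    refine (Finset.sum_eq_zero fun r _ => ?_).symm
    exact Set.indicator_of_notMem (fun h => hS h.1) p

/-- Counterfactual fairness implies group fairness w.r.t. gender. -/
theorem cf_implies_group_fairness_gender
    {Ω R G YT : Type*} [Fintype Ω] [Fintype R] [Fintype G]
    (p : Ω → ℝ) (hp0 : ∀ ω, 0 ≤ p ω) (hp1 : ∑ ω, p ω = 1)
    (Yhat : Ω → YT) (Race : Ω → R) (Gender : Ω → G)
    (EX : Set Ω) (y : YT)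
    -- all conditioning events have positive probability
    (hpos : ∀ (r : R) (g : G),
      0 < Pr p (EX ∩ {ω | Race ω = r} ∩ {ω | Gender ω = g}))
    -- Race and Gender are independent (given the data X = x)
    (hind : ∀ (r : R) (g : G),
      cPr p ({ω | Race ω = r} ∩ {ω | Gender ω = g}) EX
        = cPr p {ω | Race ω = r} EX * cPr p {ω | Gender ω = g} EX)
    -- ideal counterfactual fairness
    (hcf : ∀ (r r' : R) (g g' : G),
      cPr p {ω | Yhat ω = y} (EX ∩ {ω | Race ω = r} ∩ {ω | Gender ω = g})
        = cPr p {ω | Yhat ω = y} (EX ∩ {ω | Race ω = r'} ∩ {ω | Gender ω = g'})) :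
    ∀ g g' : G,
      cPr p {ω | Yhat ω = y} (EX ∩ {ω | Gender ω = g})
        = cPr p {ω | Yhat ω = y} (EX ∩ {ω | Gender ω = g'}) := by
  intro g g'
  -- Ω is nonempty
  have hΩ : Nonempty Ω := by
    rcases isEmpty_or_nonempty Ω with h | h
    · exfalso; rw [Finset.univ_eq_empty, Finset.sum_empty] at hp1; norm_num at hp1
    · exact h
  have r0 : R := Race (Classical.arbitrary Ω)
  set Y : Set Ω := {ω | Yhat ω = y} with hY
  set c : ℝ := cPr p Y (EX ∩ {ω | Race ω = r0} ∩ {ω | Gender ω = g}) with hc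
  -- key: for any gender g₁, cPr p Y (EX ∩ {Gender = g₁}) = c
  have key : ∀ g₁ : G, cPr p Y (EX ∩ {ω | Gender ω = g₁}) = c := by
    intro g₁
    have hnum : ∀ r : R,
        Pr p (Y ∩ (EX ∩ {ω | Race ω = r} ∩ {ω | Gender ω = g₁}))
          = c * Pr p (EX ∩ {ω | Race ω = r} ∩ {ω | Gender ω = g₁}) := by
      intro r
      have h := (hcf r r0 g₁ g).symm
      rw [← hc] at h
      unfold cPr at h
      have hd := (hpos r g₁).ne'
      field_simp at h
      linarith [h]
    have hden : Pr p (EX ∩ {ω | Gender ω = g₁})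
        = ∑ r, Pr p (EX ∩ {ω | Race ω = r} ∩ {ω | Gender ω = g₁}) := by
      rw [Pr_partition p (EX ∩ {ω | Gender ω = g₁}) Race]
      refine Finset.sum_congr rfl fun r _ => ?_
      congr 1
      ext ω; simp [Set.mem_inter_iff]; tauto
    have hnum' : Pr p (Y ∩ (EX ∩ {ω | Gender ω = g₁}))
        = ∑ r, Pr p (Y ∩ (EX ∩ {ω | Race ω = r} ∩ {ω | Gender ω = g₁})) := by
      rw [Pr_partition p (Y ∩ (EX ∩ {ω | Gender ω = g₁})) Race]
      refine Finset.sum_congr rfl fun r _ => ?_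
      congr 1
      ext ω; simp [Set.mem_inter_iff]; tauto
    have hdpos : 0 < Pr p (EX ∩ {ω | Gender ω = g₁}) := by
      rw [hden]
      have : Nonempty R := ⟨r0⟩
      exact Finset.sum_pos (fun r _ => hpos r g₁) Finset.univ_nonempty
    unfold cPr
    rw [hnum', hden]
    rw [Finset.sum_congr rfl fun r _ => hnum r, ← Finset.mul_sum]
    rw [mul_div_assoc, div_self (by rw [← hden]; exact hdpos.ne'), mul_one]
  rw [key g, key g']
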